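/- Symmetry identity (n = 2 case of Theorem 2): for all natural numbers m, positive integers w₁, w₂, real q with 0 < q < 1, and real x, [w₁]_q^{m-1} ∑_{k=0}^{w₁-1} q^{w₂k} β_{m,q^{w₁}}(w₂x + (w₂/w₁)k) = [w₂]_q^{m-1} ∑_{k=0}^{w₂-1} q^{w₁k} β_{m,q^{w₂}}(w₁x + (w₁/w₂)k). -/

import Mathlib

/-- The real `q`-analogue `[z]_r = (1 - r^z)/(1 - r)` using real powers. -/
noncomputable def qReal (r z : ℝ) : ℝ := (1 - r ^ z) / (1 - r)

/-- The Carlitz `q`-Bernoulli polynomial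
`β_{n,q}(x) = ∑_{l=0}^n C(n,l) q^{lx} [x]_q^{n-l} β_l` (real `x`, real powers),
built from a sequence `β` of `q`-Bernoulli numbers. -/
noncomputable def qBernoulliPoly (q : ℝ) (β : ℕ → ℝ) (n : ℕ) (x : ℝ) : ℝ :=
  ∑ l ∈ Finset.range (n + 1), (n.choose l : ℝ) * q ^ ((l : ℝ) * x) * (qReal q x) ^ (n - l) * β l

/-- The Carlitz recurrence: `β 0 = 1` and
`q·∑_{k=0}^{n} C(n,k) q^k β k − β n = δ_{n,1}` for `n ≥ 1`. -/
def IsCarlitz (q : ℝ) (β : ℕ → ℝ) : Prop :=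
  β 0 = 1 ∧ ∀ n : ℕ, 1 ≤ n →
    q * ∑ k ∈ Finset.range (n + 1), (n.choose k : ℝ) * q ^ k * β k - β n =
      if n = 1 then 1 else 0

open Finset

lemma tri_swap {M : Type*} [AddCommMonoid M] (n : ℕ) (f : ℕ → ℕ → M) :
    ∑ k ∈ range (n+1), ∑ i ∈ range (k+1), f k i
      = ∑ i ∈ range (n+1), ∑ k ∈ Finset.Ico i (n+1), f k i := by
  have := (Finset.sum_Ico_Ico_comm 0 (n+1) (fun i k => f k i)).symm
  simp only [Finset.range_eq_Ico]
  convert this using 2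

lemma inner_id (Q : ℝ) (n i : ℕ) (h : i ≤ n) :
    ∑ k ∈ Finset.Ico i (n+1), (n.choose k : ℝ) * (k.choose i : ℝ) * Q^k * (1-Q)^(n-k)
      = (n.choose i : ℝ) * Q^i := by
  have key : ∀ k ∈ Finset.Ico i (n+1),
      (n.choose k : ℝ) * (k.choose i : ℝ) * Q^k * (1-Q)^(n-k)
        = (n.choose i : ℝ) * Q^i * (((n-i).choose (k-i) : ℝ) * Q^(k-i) * (1-Q)^((n-i)-(k-i))) := by
    intro k hk
    simp only [Finset.mem_Ico] at hk
    obtain ⟨hik, hkn⟩ := hk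
    have hkn' : k ≤ n := by omega
    have h1 : n.choose k * k.choose i = n.choose i * (n-i).choose (k-i) := Nat.choose_mul (n := n) hik
    have h2 : Q^k = Q^i * Q^(k-i) := by rw [← pow_add]; congr 1; omega
    have h3 : (n-i) - (k-i) = n - k := by omega
    rw [h2, h3, mul_comm ((n.choose k : ℝ)) ((k.choose i : ℝ)), ← Nat.cast_mul,
      mul_comm (k.choose i) (n.choose k), h1]
    push_cast; ring
  rw [Finset.sum_congr rfl key, ← Finset.mul_sum]
  have e1 : ∑ k ∈ Finset.Ico i (n+1), (((n-i).choose (k-i) : ℝ) * Q^(k-i) * (1-Q)^((n-i)-(k-i)))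
      = ∑ t ∈ range (n-i+1), (((n-i).choose t : ℝ) * Q^t * (1-Q)^((n-i)-t)) := by
    rw [Finset.sum_Ico_eq_sum_range]
    have hr : n + 1 - i = n - i + 1 := by omega
    rw [hr]
    exact Finset.sum_congr rfl fun t _ => by simp
  rw [e1]
  have hb := add_pow Q (1-Q) (n-i)
  simp only [add_sub_cancel, one_pow] at hb
  have e2 : ∑ t ∈ range (n-i+1), (((n-i).choose t : ℝ) * Q^t * (1-Q)^((n-i)-t))
      = ∑ t ∈ range (n-i+1), Q^t * (1-Q)^((n-i)-t) * (((n-i).choose t : ℝ)) :=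
    Finset.sum_congr rfl fun t _ => by ring
  rw [e2, ← hb, mul_one]

/-- master swap identity -/
lemma master_id (c : ℕ → ℝ) (Q : ℝ) (n : ℕ) :
    ∑ k ∈ range (n+1), (n.choose k : ℝ) * Q^k * (1-Q)^(n-k) *
        (∑ i ∈ range (k+1), (k.choose i : ℝ) * (-1)^i * c i)
      = ∑ i ∈ range (n+1), (n.choose i : ℝ) * (-1)^i * Q^i * c i := by
  have e0 : ∀ k ∈ range (n+1), (n.choose k : ℝ) * Q^k * (1-Q)^(n-k) *
        (∑ i ∈ range (k+1), (k.choose i : ℝ) * (-1)^i * c i)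
      = ∑ i ∈ range (k+1),
          ((n.choose k : ℝ) * (k.choose i : ℝ) * Q^k * (1-Q)^(n-k)) * ((-1)^i * c i) := by
    intro k _
    rw [Finset.mul_sum]
    exact Finset.sum_congr rfl fun i _ => by ring
  rw [Finset.sum_congr rfl e0, tri_swap n
    (fun k i => ((n.choose k : ℝ) * (k.choose i : ℝ) * Q^k * (1-Q)^(n-k)) * ((-1)^i * c i))]
  apply Finset.sum_congr rfl
  intro i hi
  simp only [Finset.mem_range] at hi
  rw [← Finset.sum_mul, inner_id Q n i (by omega)]
  ring

/-- the building block `c q i = (i+1)(1-q)/(1-q^{i+1})` -/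
noncomputable def cc (q : ℝ) (i : ℕ) : ℝ := ((i : ℝ) + 1) * (1 - q) / (1 - q^(i+1))

/-- alternating partial sums -/
noncomputable def gam (q : ℝ) (k : ℕ) : ℝ := ∑ i ∈ range (k+1), (k.choose i : ℝ) * (-1)^i * cc q i

lemma alt_sum_weighted (n : ℕ) (hn : 1 ≤ n) :
    ∑ i ∈ range (n+1), (n.choose i : ℝ) * (-1)^i * ((i : ℝ) + 1)
      = if n = 1 then -1 else 0 := by
  have h1 : ∑ i ∈ range (n+1), (n.choose i : ℝ) * (-1)^i = 0 := by
    have := Int.alternating_sum_range_choose_of_ne (n := n) (by omega)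
    have := congrArg (fun z : ℤ => (z : ℝ)) this
    push_cast at this
    rw [← this]
    exact Finset.sum_congr rfl fun i _ => by ring
  have h2 : ∑ i ∈ range (n+1), (n.choose i : ℝ) * (-1)^i * (i : ℝ)
      = if n = 1 then -1 else 0 := by
    obtain ⟨m, rfl⟩ : ∃ m, n = m + 1 := ⟨n - 1, by omega⟩
    rw [Finset.sum_range_succ']
    simp only [Nat.cast_zero, mul_zero, add_zero]
    have key : ∀ j ∈ range (m+1), ((m+1).choose (j+1) : ℝ) * (-1)^(j+1) * ((j+1 : ℕ):ℝ)
        = -((m+1) : ℝ) * ((m.choose j : ℝ) * (-1)^j) := by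
      intro j _
      have h : (m+1) * m.choose j = (m+1).choose (j+1) * (j+1) := Nat.add_one_mul_choose_eq m j
      have h' := congrArg (fun z : ℕ => (z : ℝ)) h
      push_cast at h' ⊢
      linear_combination (-(-1:ℝ)^(j+1)) * h'
    calc ∑ j ∈ range (m+1), ((m+1).choose (j+1) : ℝ) * (-1)^(j+1) * ((j+1 : ℕ):ℝ)
        = ∑ j ∈ range (m+1), -((m+1) : ℝ) * ((m.choose j : ℝ) * (-1)^j) :=
          Finset.sum_congr rfl key
      _ = -((m+1):ℝ) * ∑ j ∈ range (m+1), ((m.choose j : ℝ) * (-1)^j) := by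
          rw [Finset.mul_sum]
      _ = if m + 1 = 1 then -1 else 0 := by
          rcases Nat.eq_zero_or_pos m with hm | hm
          · subst hm; norm_num
          · have : ∑ j ∈ range (m+1), ((m.choose j : ℝ) * (-1)^j) = 0 := by
              have := Int.alternating_sum_range_choose_of_ne (n := m) (by omega)
              have := congrArg (fun z : ℤ => (z : ℝ)) this
              push_cast at this
              rw [← this]
              exact Finset.sum_congr rfl fun i _ => by ring
            rw [this, mul_zero, if_neg (by omega)]
  have : ∑ i ∈ range (n+1), (n.choose i : ℝ) * (-1)^i * ((i : ℝ) + 1)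
      = (∑ i ∈ range (n+1), (n.choose i : ℝ) * (-1)^i * (i : ℝ))
        + ∑ i ∈ range (n+1), (n.choose i : ℝ) * (-1)^i := by
    rw [← Finset.sum_add_distrib]
    exact Finset.sum_congr rfl fun i _ => by ring
  rw [this, h1, h2, add_zero]

lemma one_sub_pow_ne {q : ℝ} (hq0 : 0 < q) (hq1 : q < 1) {j : ℕ} (hj : j ≠ 0) :
    (1 : ℝ) - q^j ≠ 0 := by
  have : q^j < 1 := pow_lt_one₀ hq0.le hq1 hj
  intro h; nlinarith

lemma cc_mul {q : ℝ} (hq0 : 0 < q) (hq1 : q < 1) (i : ℕ) :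
    cc q i * (q^(i+1) - 1) = -(((i:ℝ)+1)*(1-q)) := by
  have h := one_sub_pow_ne hq0 hq1 (Nat.succ_ne_zero i)
  rw [cc]
  field_simp
  ring

lemma B_rec (q : ℝ) (hq0 : 0 < q) (hq1 : q < 1) (n : ℕ) (hn : 1 ≤ n) :
    q * ∑ k ∈ range (n+1), (n.choose k : ℝ) * q^k * (gam q k / (1-q)^k)
      - gam q n / (1-q)^n = if n = 1 then 1 else 0 := by
  have hq : (1:ℝ) - q ≠ 0 := by intro h; nlinarith
  have step1 : ∀ k ∈ range (n+1), (n.choose k : ℝ) * q^k * (gam q k / (1-q)^k)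
      = ((n.choose k : ℝ) * q^k * (1-q)^(n-k) * gam q k) / (1-q)^n := by
    intro k hk
    simp only [Finset.mem_range] at hk
    have e : (1-q)^n = (1-q)^k * (1-q)^(n-k) := by rw [← pow_add]; congr 1; omega
    rw [e]
    field_simp
  rw [Finset.sum_congr rfl step1, ← Finset.sum_div]
  have hmaster : ∑ k ∈ range (n+1), ((n.choose k : ℝ) * q^k * (1-q)^(n-k) * gam q k)
      = ∑ i ∈ range (n+1), (n.choose i : ℝ) * (-1)^i * q^i * cc q i := by
    rw [← master_id (cc q) q n]
    exact Finset.sum_congr rfl fun k _ => by rw [gam]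
  rw [hmaster]
  have e2 : q * ((∑ i ∈ range (n+1), (n.choose i : ℝ) * (-1)^i * q^i * cc q i) / (1-q)^n)
        - gam q n / (1-q)^n
      = (∑ i ∈ range (n+1), (n.choose i : ℝ) * (-1)^i * (cc q i * (q^(i+1)-1))) / (1-q)^n := by
    rw [mul_div_assoc', div_sub_div_same]
    congr 1
    rw [gam, Finset.mul_sum, ← Finset.sum_sub_distrib]
    exact Finset.sum_congr rfl fun i _ => by rw [pow_succ]; ring
  rw [e2]
  have e3 : ∑ i ∈ range (n+1), (n.choose i : ℝ) * (-1)^i * (cc q i * (q^(i+1)-1))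
      = -(1-q) * ∑ i ∈ range (n+1), (n.choose i : ℝ) * (-1)^i * ((i:ℝ)+1) := by
    rw [Finset.mul_sum]
    exact Finset.sum_congr rfl fun i _ => by rw [cc_mul hq0 hq1]; ring
  rw [e3, alt_sum_weighted n hn]
  by_cases h1 : n = 1
  · subst h1; simp only [if_pos]; field_simp
  · simp [h1]

lemma gam_zero (q : ℝ) (hq0 : 0 < q) (hq1 : q < 1) : gam q 0 = 1 := by
  have hq : (1:ℝ) - q ≠ 0 := by intro h; nlinarith
  simp [gam, cc, div_self hq]

lemma carlitz_unique (q : ℝ) (hq0 : 0 < q) (hq1 : q < 1) (β : ℕ → ℝ)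
    (hβ : IsCarlitz q β) : ∀ n, β n = gam q n / (1-q)^n := by
  intro n
  induction n using Nat.strong_induction_on with
  | _ n ih =>
    match n with
    | 0 => simp [hβ.1, gam_zero q hq0 hq1]
    | (m+1) =>
      have hrecβ := hβ.2 (m+1) (by omega)
      have hrecB := B_rec q hq0 hq1 (m+1) (by omega)
      rw [Finset.sum_range_succ] at hrecβ hrecB
      have hS : ∑ k ∈ range (m+1), ((m+1).choose k : ℝ) * q^k * β k
          = ∑ k ∈ range (m+1), ((m+1).choose k : ℝ) * q^k * (gam q k / (1-q)^k) :=
        Finset.sum_congr rfl fun k hk => by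
          rw [ih k (by simp only [Finset.mem_range] at hk; omega)]
      rw [hS] at hrecβ
      simp only [Nat.choose_self, Nat.cast_one, one_mul] at hrecβ hrecB
      have hfac : (q * q^(m+1) - 1) ≠ 0 := by
        have : q * q^(m+1) < 1 := by
          have h1 : q^(m+1) < 1 := pow_lt_one₀ hq0.le hq1 (by omega)
          have h2 : 0 < q^(m+1) := pow_pos hq0 _
          nlinarith
        intro h; nlinarith
      have hz : (q * q^(m+1) - 1) * (β (m+1) - gam q (m+1) / (1-q)^(m+1)) = 0 := by
        linear_combination hrecβ - hrecB
      rcases mul_eq_zero.mp hz with h | h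
      · exact absurd h hfac
      · linarith

lemma poly_closed (q : ℝ) (hq0 : 0 < q) (hq1 : q < 1) (β : ℕ → ℝ)
    (hβ : ∀ l, β l = gam q l / (1-q)^l) (m : ℕ) (x : ℝ) :
    qBernoulliPoly q β m x
      = (∑ i ∈ range (m+1), (m.choose i : ℝ) * (-1)^i * (q ^ x)^i * cc q i) / (1-q)^m := by
  have hq : (1:ℝ) - q ≠ 0 := by intro h; nlinarith
  have hQdef : ∀ l : ℕ, q ^ ((l:ℝ) * x) = (q ^ x)^l := by
    intro l
    rw [mul_comm, Real.rpow_mul hq0.le, Real.rpow_natCast]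
  rw [qBernoulliPoly]
  have step : ∀ l ∈ range (m+1),
      (m.choose l : ℝ) * q ^ ((l:ℝ) * x) * (qReal q x) ^ (m - l) * β l
        = ((m.choose l : ℝ) * (q^x)^l * (1 - q^x)^(m-l) * gam q l) / (1-q)^m := by
    intro l hl
    simp only [Finset.mem_range] at hl
    rw [hβ l, hQdef l, qReal, div_pow]
    have e : (1-q)^m = (1-q)^l * (1-q)^(m-l) := by rw [← pow_add]; congr 1; omega
    rw [e]
    have h1 : ((1:ℝ)-q)^l ≠ 0 := pow_ne_zero _ hq
    have h2 : ((1:ℝ)-q)^(m-l) ≠ 0 := pow_ne_zero _ hq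
    ring
  rw [Finset.sum_congr rfl step, ← Finset.sum_div]
  congr 1
  rw [← master_id (cc q) (q^x) m]
  exact Finset.sum_congr rfl fun k _ => by rw [gam]

noncomputable def sideVal (q x : ℝ) (m w₁ w₂ : ℕ) : ℝ :=
  ∑ i ∈ Finset.range (m+1), (m.choose i : ℝ) * (-1)^i * ((i:ℝ)+1)
    * q ^ ((i : ℝ) * ((w₁*w₂ : ℕ) : ℝ) * x)
    * (1 - q^((i+1)*(w₁*w₂)))
    / ((1 - q^((i+1)*w₁)) * (1 - q^((i+1)*w₂)))
    / ((1-q) ^ ((m:ℤ)-1))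

lemma sideVal_symm (q x : ℝ) (m w₁ w₂ : ℕ) : sideVal q x m w₁ w₂ = sideVal q x m w₂ w₁ := by
  unfold sideVal
  apply Finset.sum_congr rfl
  intro i _
  rw [Nat.mul_comm w₁ w₂, mul_comm (1 - q^((i+1)*w₁)) (1 - q^((i+1)*w₂))]

set_option maxHeartbeats 2000000 in
lemma side_eq (m w₁ w₂ : ℕ) (hw₁ : 0 < w₁) (hw₂ : 0 < w₂) (q : ℝ) (hq0 : 0 < q)
    (hq1 : q < 1) (x : ℝ) (β : ℕ → ℝ) (hβ : IsCarlitz (q ^ w₁) β) :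
    (qReal q (w₁ : ℝ)) ^ ((m : ℤ) - 1) *
        ∑ k ∈ Finset.range w₁,
          q ^ (w₂ * k) *
            qBernoulliPoly (q ^ w₁) β m
              ((w₂ : ℝ) * x + ((w₂ : ℝ) / (w₁ : ℝ)) * (k : ℝ))
      = sideVal q x m w₁ w₂ := by
  have hq : (1:ℝ) - q ≠ 0 := by intro h; nlinarith
  have hQ0 : 0 < q ^ w₁ := pow_pos hq0 _
  have hQ1 : q ^ w₁ < 1 := pow_lt_one₀ hq0.le hq1 hw₁.ne'
  have hQne : (1:ℝ) - q ^ w₁ ≠ 0 := one_sub_pow_ne hq0 hq1 hw₁.ne'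
  have huniq := carlitz_unique (q ^ w₁) hQ0 hQ1 β hβ
  -- step A : rewrite each k-term
  have stepA : ∀ k ∈ Finset.range w₁,
      q ^ (w₂ * k) *
          qBernoulliPoly (q ^ w₁) β m ((w₂ : ℝ) * x + ((w₂ : ℝ) / (w₁ : ℝ)) * (k : ℝ))
        = ∑ i ∈ Finset.range (m+1),
            ((m.choose i : ℝ) * (-1)^i * cc (q^w₁) i / (1 - q^w₁)^m
              * q ^ ((i:ℝ) * ((w₁*w₂ : ℕ):ℝ) * x)) * (q^((i+1)*w₂))^k := by
    intro k _
    rw [poly_closed (q^w₁) hQ0 hQ1 β huniq m _]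
    have hyk : ((q:ℝ)^w₁) ^ ((w₂ : ℝ) * x + ((w₂ : ℝ) / (w₁ : ℝ)) * (k : ℝ))
        = q ^ (((w₁*w₂ : ℕ):ℝ) * x) * q ^ (w₂*k) := by
      rw [← Real.rpow_natCast q w₁, ← Real.rpow_mul hq0.le]
      have he : (w₁:ℝ) * ((w₂ : ℝ) * x + ((w₂ : ℝ) / (w₁ : ℝ)) * (k : ℝ))
          = ((w₁*w₂ : ℕ):ℝ) * x + ((w₂*k : ℕ):ℝ) := by
        have hw : (w₁:ℝ) ≠ 0 := Nat.cast_ne_zero.mpr hw₁.ne'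
        push_cast
        field_simp
      rw [he, Real.rpow_add hq0, Real.rpow_natCast]
    rw [hyk, div_eq_mul_inv, Finset.sum_mul, Finset.mul_sum]
    apply Finset.sum_congr rfl
    intro i _
    have e1 : (q ^ (((w₁*w₂:ℕ):ℝ)*x) * q ^ (w₂*k))^i
        = q ^ ((i:ℝ)*((w₁*w₂:ℕ):ℝ)*x) * q ^ (w₂*k*i) := by
      rw [mul_pow, ← pow_mul]
      congr 1
      rw [← Real.rpow_natCast (q ^ (((w₁*w₂:ℕ):ℝ)*x)) i, ← Real.rpow_mul hq0.le]
      congr 1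
      ring
    rw [e1]
    have e2 : q ^ (w₂*k) * q ^ (w₂*k*i) = (q^((i+1)*w₂))^k := by
      rw [← pow_add, ← pow_mul]
      congr 1
      ring
    calc q ^ (w₂*k) * ((m.choose i : ℝ) * (-1)^i
            * (q ^ ((i:ℝ)*((w₁*w₂:ℕ):ℝ)*x) * q ^ (w₂*k*i)) * cc (q^w₁) i * ((1 - q^w₁)^m)⁻¹)
        = (q ^ (w₂*k) * q ^ (w₂*k*i)) * ((m.choose i : ℝ) * (-1)^i
            * q ^ ((i:ℝ)*((w₁*w₂:ℕ):ℝ)*x) * cc (q^w₁) i * ((1 - q^w₁)^m)⁻¹) := by ring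
      _ = _ := by rw [e2, div_eq_mul_inv]; ring
  rw [Finset.sum_congr rfl stepA, Finset.sum_comm]
  have stepB : ∀ i ∈ Finset.range (m+1),
      ∑ k ∈ Finset.range w₁,
          ((m.choose i : ℝ) * (-1)^i * cc (q^w₁) i / (1 - q^w₁)^m
            * q ^ ((i:ℝ) * ((w₁*w₂ : ℕ):ℝ) * x)) * (q^((i+1)*w₂))^k
        = ((m.choose i : ℝ) * (-1)^i * cc (q^w₁) i / (1 - q^w₁)^m
            * q ^ ((i:ℝ) * ((w₁*w₂ : ℕ):ℝ) * x))
          * ((q^((i+1)*(w₁*w₂)) - 1)/(q^((i+1)*w₂) - 1)) := by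
    intro i _
    have hne : q^((i+1)*w₂) ≠ 1 := by
      have : q^((i+1)*w₂) < 1 := pow_lt_one₀ hq0.le hq1 (by positivity)
      exact ne_of_lt this
    rw [← Finset.mul_sum, geom_sum_eq hne w₁, ← pow_mul]
    congr 3
    ring
  rw [Finset.sum_congr rfl stepB, Finset.mul_sum]
  unfold sideVal
  apply Finset.sum_congr rfl
  intro i hi
  have hd1 : (1:ℝ) - q^((i+1)*w₁) ≠ 0 := one_sub_pow_ne hq0 hq1 (by positivity)
  have hd2 : (1:ℝ) - q^((i+1)*w₂) ≠ 0 := one_sub_pow_ne hq0 hq1 (by positivity)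
  have hcc : cc (q^w₁) i = ((i:ℝ)+1)*(1 - q^w₁)/(1 - q^((i+1)*w₁)) := by
    rw [cc, ← pow_mul]
    congr 3
    ring
  have hqr : qReal q (w₁ : ℝ) = (1 - q^w₁)/(1-q) := by
    rw [qReal, Real.rpow_natCast]
  have za : ∀ a : ℝ, a ≠ 0 → a^((m:ℤ)-1) = a^m/a := by
    intro a ha
    rw [zpow_sub₀ ha, zpow_natCast, zpow_one]
  rw [hcc, hqr, div_zpow, za _ hQne, za _ hq]
  have hneg1 : q^((i+1)*(w₁*w₂)) - 1 = -(1 - q^((i+1)*(w₁*w₂))) := by ring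
  have hneg2 : q^((i+1)*w₂) - 1 = -(1 - q^((i+1)*w₂)) := by ring
  rw [hneg1, hneg2]
  set A := (1:ℝ) - q^w₁ with hA
  set E := (1:ℝ) - q with hE
  set D1 := (1:ℝ) - q^((i+1)*w₁) with hD1
  set D2 := (1:ℝ) - q^((i+1)*w₂) with hD2
  set DN := (1:ℝ) - q^((i+1)*(w₁*w₂)) with hDN
  set R := q ^ ((i:ℝ) * ((w₁*w₂ : ℕ):ℝ) * x) with hR
  set P := ((m.choose i : ℕ) : ℝ) with hP
  have hpm1 : A^m ≠ 0 := pow_ne_zero _ hQne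
  have hpm2 : E^m ≠ 0 := pow_ne_zero _ hq
  field_simp

theorem qBernoulli_symmetry (m : ℕ) (w₁ w₂ : ℕ) (hw₁ : 0 < w₁) (hw₂ : 0 < w₂)
    (q : ℝ) (hq0 : 0 < q) (hq1 : q < 1) (x : ℝ)
    (β : ℝ → ℕ → ℝ) (hβ : ∀ r : ℝ, 0 < r → r < 1 → IsCarlitz r (β r)) :
    (qReal q (w₁ : ℝ)) ^ ((m : ℤ) - 1) *
        ∑ k ∈ Finset.range w₁,
          q ^ (w₂ * k) *
            qBernoulliPoly (q ^ w₁) (β (q ^ w₁)) m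
              ((w₂ : ℝ) * x + ((w₂ : ℝ) / (w₁ : ℝ)) * (k : ℝ)) =
      (qReal q (w₂ : ℝ)) ^ ((m : ℤ) - 1) *
        ∑ k ∈ Finset.range w₂,
          q ^ (w₁ * k) *
            qBernoulliPoly (q ^ w₂) (β (q ^ w₂)) m
              ((w₁ : ℝ) * x + ((w₁ : ℝ) / (w₂ : ℝ)) * (k : ℝ)) := by
  rw [side_eq m w₁ w₂ hw₁ hw₂ q hq0 hq1 x (β (q ^ w₁))
      (hβ _ (pow_pos hq0 _) (pow_lt_one₀ hq0.le hq1 hw₁.ne')),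
    side_eq m w₂ w₁ hw₂ hw₁ q hq0 hq1 x (β (q ^ w₂))
      (hβ _ (pow_pos hq0 _) (pow_lt_one₀ hq0.le hq1 hw₂.ne')),
    sideVal_symm]
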